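/- If a sequence (v_n) of reals in [0, b) satisfies v_{n+1} = v_n + c(b - v_n)^{p+1} for constants c > 0 and p > 0, then n^{1/p}(b - v_n) → (cp)^{-1/p} as n → ∞. -/

import Mathlib

open Filter Real Topology

/-- If a sequence `(v_n)` in `[0, b)` satisfies `v_{n+1} = v_n + c (b - v_n)^{p+1}` with
`c > 0`, `p > 0`, `v_0 < b`, `c (b - v_0)^p < 1`, then `n^{1/p} (b - v_n) → (c p)^{-1/p}`. -/
theorem stmt_15 (b c p : ℝ) (hc : 0 < c) (hp : 0 < p) (v : ℕ → ℝ)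
    (hv : ∀ n, v n ∈ Set.Ico (0 : ℝ) b)
    (hstep : c * (b - v 0) ^ p < 1)
    (hrec : ∀ n, v (n + 1) = v n + c * (b - v n) ^ (p + 1)) :
    Tendsto (fun n : ℕ => (n : ℝ) ^ (1 / p) * (b - v n)) atTop
      (nhds ((c * p) ^ (-(1 / p)))) := by
  set w : ℕ → ℝ := fun n => b - v n with hwdef
  have hwpos : ∀ n, 0 < w n := fun n => sub_pos.2 (hv n).2
  have hwrec : ∀ n, w (n + 1) = w n - c * w n ^ (p + 1) := by
    intro n
    simp only [hwdef, hrec n]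
    ring
  have hwlt : ∀ n, w (n + 1) < w n := by
    intro n
    rw [hwrec]
    nlinarith [Real.rpow_pos_of_pos (hwpos n) (p + 1)]
  -- the limit of w
  have hanti : Antitone w := antitone_nat_of_succ_le fun n => (hwlt n).le
  have hbdd : BddBelow (Set.range w) := ⟨0, by rintro _ ⟨n, rfl⟩; exact (hwpos n).le⟩
  have hL : Tendsto w atTop (𝓝 (⨅ n, w n)) := tendsto_atTop_ciInf hanti hbdd
  set L := ⨅ n, w n with hLdef
  have hL0 : 0 ≤ L := le_ciInf fun n => (hwpos n).le
  have hLrpow : Tendsto (fun n => w n ^ (p + 1)) atTop (𝓝 (L ^ (p + 1))) :=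
    hL.rpow_const (Or.inr (by positivity))
  have hL1 : Tendsto (fun n => w (n + 1)) atTop (𝓝 L) :=
    hL.comp (tendsto_add_atTop_nat 1)
  have hL2 : Tendsto (fun n => w (n + 1)) atTop (𝓝 (L - c * L ^ (p + 1))) := by
    simp only [hwrec]
    exact hL.sub (hLrpow.const_mul c)
  have hLeq : L = L - c * L ^ (p + 1) := tendsto_nhds_unique hL1 hL2
  have hLzero : L = 0 := by
    have h1 : L ^ (p + 1) = 0 := by nlinarith
    have := (Real.rpow_eq_zero hL0 (by positivity)).1 h1
    exact this
  rw [hLzero] at hL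
  -- t n
  set t : ℕ → ℝ := fun n => c * w n ^ p with htdef
  have htpos : ∀ n, 0 < t n :=
    fun n => mul_pos hc (Real.rpow_pos_of_pos (hwpos n) p)
  have ht0 : Tendsto t atTop (𝓝 0) := by
    have : Tendsto (fun n => w n ^ p) atTop (𝓝 ((0 : ℝ) ^ p)) :=
      hL.rpow_const (Or.inr hp.le)
    rw [Real.zero_rpow hp.ne'] at this
    simpa using this.const_mul c
  have hwmul : ∀ n, w (n + 1) = w n * (1 - t n) := by
    intro n
    rw [hwrec, htdef]
    have : w n ^ (p + 1) = w n ^ p * w n := by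
      rw [Real.rpow_add (hwpos n), Real.rpow_one]
    rw [this]; ring
  have htlt : ∀ n, t n < 1 := by
    intro n
    have h1 := hwpos (n + 1)
    rw [hwmul n] at h1
    nlinarith [hwpos n]
  -- x n
  set x : ℕ → ℝ := fun n => w n ^ (-p) with hxdef
  have hxdiff : ∀ n, x (n + 1) - x n = c * (((1 - t n) ^ (-p) - 1) / t n) := by
    intro n
    have h1 : x (n + 1) = w n ^ (-p) * (1 - t n) ^ (-p) := by
      rw [hxdef]
      simp only [hwmul n]
      rw [Real.mul_rpow (hwpos n).le (by linarith [htlt n])]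
    have h2 : w n ^ (-p) = c / t n := by
      rw [Real.rpow_neg (hwpos n).le, htdef,
        eq_div_iff (mul_pos hc (Real.rpow_pos_of_pos (hwpos n) p)).ne']
      rw [inv_mul_eq_div, mul_div_assoc, div_self (Real.rpow_pos_of_pos (hwpos n) p).ne',
        mul_one]
    rw [h1, h2, hxdef]
    simp only [h2]
    field_simp
  -- derivative / slope limit
  have hderiv : HasDerivAt (fun s : ℝ => (1 - s) ^ (-p)) p 0 := by
    have h1 : HasDerivAt (fun s : ℝ => 1 - s) (-1) 0 := (hasDerivAt_id 0).const_sub 1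
    have h2 : HasDerivAt (fun y : ℝ => y ^ (-p)) ((-p) * (1 - 0 : ℝ) ^ (-p - 1)) (1 - 0 : ℝ) :=
      Real.hasDerivAt_rpow_const (Or.inl (by norm_num))
    have h3 := h2.comp 0 h1
    simp only [Function.comp_def] at h3
    exact h3.congr_deriv (by norm_num)
  have hslope : Tendsto (fun s : ℝ => ((1 - s) ^ (-p) - 1) / s) (𝓝[≠] (0:ℝ)) (𝓝 p) := by
    have := hasDerivAt_iff_tendsto_slope.1 hderiv
    refine this.congr fun s => ?_
    simp [slope_def_field, div_eq_inv_mul]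
  have ht0' : Tendsto t atTop (𝓝[≠] (0:ℝ)) :=
    tendsto_nhdsWithin_of_tendsto_nhds_of_eventually_within _ ht0
      (Eventually.of_forall fun n => (htpos n).ne')
  have hdiffp : Tendsto (fun n => ((1 - t n) ^ (-p) - 1) / t n) atTop (𝓝 p) :=
    hslope.comp ht0'
  have hxd : Tendsto (fun n => x (n + 1) - x n) atTop (𝓝 (c * p)) := by
    simp only [hxdiff]
    exact hdiffp.const_mul c
  -- Cesàro
  have hces := hxd.cesaro
  have htel : ∀ n : ℕ, ∑ i ∈ Finset.range n, (x (i + 1) - x i) = x n - x 0 :=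
    fun n => Finset.sum_range_sub x n
  simp only [htel] at hces
  have hinvn : Tendsto (fun n : ℕ => (n : ℝ)⁻¹) atTop (𝓝 0) :=
    tendsto_inv_atTop_zero.comp tendsto_natCast_atTop_atTop
  have hxavg : Tendsto (fun n : ℕ => (n : ℝ)⁻¹ * x n) atTop (𝓝 (c * p)) := by
    have h1 : Tendsto (fun n : ℕ => (n : ℝ)⁻¹ * (x n - x 0) + (n : ℝ)⁻¹ * x 0) atTop
        (𝓝 (c * p + 0 * x 0)) := hces.add (hinvn.mul_const (x 0))
    simp only [zero_mul, add_zero] at h1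
    refine h1.congr fun n => by ring
  -- final
  have hfin : Tendsto (fun n : ℕ => ((n : ℝ)⁻¹ * x n) ^ (-(1/p))) atTop
      (𝓝 ((c * p) ^ (-(1/p)))) :=
    hxavg.rpow_const (Or.inl (by positivity))
  refine hfin.congr' ?_
  filter_upwards [Ici_mem_atTop 1] with n hn
  have hnpos : (0 : ℝ) < n := by exact_mod_cast Nat.lt_of_lt_of_le Nat.zero_lt_one hn
  have hxn : x n = w n ^ (-p) := rfl
  have hexp : (-p) * (-(1/p)) = 1 := by field_simp
  rw [hxn, Real.mul_rpow (inv_nonneg.2 hnpos.le) (Real.rpow_nonneg (hwpos n).le _),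
    Real.inv_rpow hnpos.le, Real.rpow_neg hnpos.le, inv_inv,
    ← Real.rpow_mul (hwpos n).le, hexp, Real.rpow_one]
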